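/- Under the IV identification assumptions, the CDF of the potential outcome under control for compliers satisfies F_co^{(0)}(t) = [E(1{Y ≤ t}·(1−D) | Z=1) − E(1{Y ≤ t}·(1−D) | Z=0)] / [E(1−D | Z=1) − E(1−D | Z=0)] for all t. -/

import Mathlib

open MeasureTheory ProbabilityTheory
open scoped Classical

lemma cond_integral_indicator' {Ω : Type*} [MeasurableSpace Ω] (μ : Measure Ω)
    {s A : Set Ω} (hs : MeasurableSet s) (hA : MeasurableSet A) {f : Ω → ℝ}
    (hf : ∀ ω ∈ s, f ω = if ω ∈ A then 1 else 0) :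
    ∫ ω, f ω ∂μ[|s] = (μ s)⁻¹.toReal * (μ (s ∩ A)).toReal := by
  rw [ProbabilityTheory.cond, integral_smul_measure]
  have h1 : ∫ ω in s, f ω ∂μ = ∫ ω in s, A.indicator (fun _ => (1:ℝ)) ω ∂μ :=
    setIntegral_congr_fun hs (fun ω hω => by
      rw [hf ω hω, Set.indicator_apply])
  rw [h1, setIntegral_indicator hA, setIntegral_const]
  simp [smul_eq_mul]
  exact Or.inl rfl

theorem complier_control_cdf_identification {Ω : Type*} [MeasurableSpace Ω]
    (μ : Measure Ω) [IsProbabilityMeasure μ]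
    (Z D0 D1 Y0 Y1 D Y : Ω → ℝ)
    (hZ : Measurable Z) (hD0 : Measurable D0) (hD1 : Measurable D1)
    (hY0 : Measurable Y0) (hY1 : Measurable Y1)
    (hZbin : ∀ ω, Z ω = 0 ∨ Z ω = 1)
    (hD0bin : ∀ ω, D0 ω = 0 ∨ D0 ω = 1)
    (hD1bin : ∀ ω, D1 ω = 0 ∨ D1 ω = 1)
    (hD : ∀ ω, D ω = Z ω * D1 ω + (1 - Z ω) * D0 ω)
    (hYobs : ∀ ω, Y ω = D ω * Y1 ω + (1 - D ω) * Y0 ω)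
    (hindep : IndepFun Z (fun ω => (Y0 ω, Y1 ω, D0 ω, D1 ω)) μ)
    (hmono : ∀ᵐ ω ∂μ, D0 ω ≤ D1 ω)
    (hnonzero : μ {ω | D0 ω = 1} < μ {ω | D1 ω = 1})
    (hZ1 : 0 < μ {ω | Z ω = 1}) (hZ0 : 0 < μ {ω | Z ω = 0}) :
    ∀ t : ℝ,
      (μ[|{ω | D1 ω = 1 ∧ D0 ω = 0}] {ω | Y0 ω ≤ t}).toReal =
        ((∫ ω, (if Y ω ≤ t then 1 - D ω else 0) ∂μ[|{ω | Z ω = 1}]) -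
            ∫ ω, (if Y ω ≤ t then 1 - D ω else 0) ∂μ[|{ω | Z ω = 0}]) /
          ((∫ ω, 1 - D ω ∂μ[|{ω | Z ω = 1}]) -
            ∫ ω, 1 - D ω ∂μ[|{ω | Z ω = 0}]) := by
  intro t
  set W : Ω → ℝ × ℝ × ℝ × ℝ := fun ω => (Y0 ω, Y1 ω, D0 ω, D1 ω) with hWdef
  have hWm : Measurable W := (hY0.prodMk (hY1.prodMk (hD0.prodMk hD1)))
  -- the basic sets
  set S : Set Ω := {ω | Y0 ω ≤ t} with hSdef
  set B1 : Set Ω := {ω | D1 ω = 0} with hB1def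
  set B0 : Set Ω := {ω | D0 ω = 0} with hB0def
  set C : Set Ω := {ω | D1 ω = 1 ∧ D0 ω = 0} with hCdef
  have hSm : MeasurableSet S := hY0 measurableSet_Iic
  have hB1m : MeasurableSet B1 := hD1 (measurableSet_singleton 0)
  have hB0m : MeasurableSet B0 := hD0 (measurableSet_singleton 0)
  have hCm : MeasurableSet C :=
    (hD1 (measurableSet_singleton 1)).inter (hD0 (measurableSet_singleton 0))
  set PA1 : Set (ℝ × ℝ × ℝ × ℝ) := Set.Iic t ×ˢ Set.univ ×ˢ Set.univ ×ˢ ({0} : Set ℝ) with hPA1def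
  set PA0 : Set (ℝ × ℝ × ℝ × ℝ) := Set.Iic t ×ˢ Set.univ ×ˢ ({0} : Set ℝ) ×ˢ Set.univ with hPA0def
  set PB1 : Set (ℝ × ℝ × ℝ × ℝ) := Set.univ ×ˢ Set.univ ×ˢ Set.univ ×ˢ ({0} : Set ℝ) with hPB1def
  set PB0 : Set (ℝ × ℝ × ℝ × ℝ) := Set.univ ×ˢ Set.univ ×ˢ ({0} : Set ℝ) ×ˢ Set.univ with hPB0def
  -- a.e. implication from monotonicity
  have hD0le : ∀ᵐ ω ∂μ, D1 ω = 0 → D0 ω = 0 := by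
    filter_upwards [hmono] with ω h h1
    rcases hD0bin ω with h0 | h0
    · exact h0
    · rw [h0] at h; rw [h1] at h; linarith
  -- key additivity
  have add : ∀ T : Set Ω, MeasurableSet T → μ (T ∩ B1) + μ (T ∩ C) = μ (T ∩ B0) := by
    intro T hT
    have h1 : T ∩ B0 = (T ∩ B0 ∩ B1) ∪ (T ∩ C) := by
      ext ω
      simp only [hB0def, hB1def, hCdef, Set.mem_inter_iff, Set.mem_union, Set.mem_setOf_eq]
      constructor
      · rintro ⟨hs, h0⟩
        rcases hD1bin ω with h | h
        · exact Or.inl ⟨⟨hs, h0⟩, h⟩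
        · exact Or.inr ⟨hs, h, h0⟩
      · rintro (⟨⟨hs, h0⟩, _⟩ | ⟨hs, _, h0⟩) <;> exact ⟨hs, h0⟩
    have hdisj : Disjoint (T ∩ B0 ∩ B1) (T ∩ C) := by
      rw [Set.disjoint_left]
      rintro ω ⟨_, h1⟩ ⟨_, h2, _⟩
      simp only [hB1def, Set.mem_setOf_eq] at h1
      rw [h1] at h2; norm_num at h2
    have h2 : μ (T ∩ B0 ∩ B1) = μ (T ∩ B1) := by
      refine measure_congr (Filter.eventuallyEq_set.2 ?_)
      filter_upwards [hD0le] with ω h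
      simp only [hB0def, hB1def, Set.mem_inter_iff, Set.mem_setOf_eq]
      constructor
      · rintro ⟨⟨hs, _⟩, h1⟩; exact ⟨hs, h1⟩
      · rintro ⟨hs, h1⟩; exact ⟨⟨hs, h h1⟩, h1⟩
    rw [h1, measure_union hdisj (hT.inter hCm), h2]
  -- positivity of complier probability
  have hfin : ∀ u : Set Ω, μ u ≠ ⊤ := fun u => measure_ne_top μ u
  have part : ∀ (f : Ω → ℝ), Measurable f → (∀ ω, f ω = 0 ∨ f ω = 1) →
      μ {ω | f ω = 1} + μ {ω | f ω = 0} = 1 := by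
    intro f hf hbin
    have : {ω | f ω = 1} ∪ {ω | f ω = 0} = Set.univ := by
      ext ω; simp only [Set.mem_union, Set.mem_setOf_eq, Set.mem_univ, iff_true]
      exact (hbin ω).symm
    have hms : MeasurableSet {ω | f ω = 0} := hf (measurableSet_singleton 0)
    have hdisj : Disjoint {ω | f ω = 1} {ω | f ω = 0} := by
      rw [Set.disjoint_left]; rintro ω h1 h0
      simp only [Set.mem_setOf_eq] at h1 h0
      rw [h0] at h1; norm_num at h1
    rw [← measure_union hdisj hms, this, measure_univ]
  have hpart1 := part D1 hD1 hD1bin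
  have hpart0 := part D0 hD0 hD0bin
  have haddU := add Set.univ MeasurableSet.univ
  simp only [Set.univ_inter] at haddU
  have htoR : ∀ a b : ENNReal, a ≠ ⊤ → b ≠ ⊤ → (a + b).toReal = a.toReal + b.toReal :=
    fun a b ha hb => ENNReal.toReal_add ha hb
  have hlt : (μ {ω | D0 ω = 1}).toReal < (μ {ω | D1 ω = 1}).toReal :=
    (ENNReal.toReal_lt_toReal (hfin _) (hfin _)).2 hnonzero
  have hC1 : (μ B1).toReal + (μ C).toReal = (μ B0).toReal := by
    rw [← htoR _ _ (hfin _) (hfin _), haddU]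
  have hp1 : (μ {ω | D1 ω = 1}).toReal + (μ B1).toReal = 1 := by
    rw [← htoR _ _ (hfin _) (hfin _), hpart1]; simp
  have hp0 : (μ {ω | D0 ω = 1}).toReal + (μ B0).toReal = 1 := by
    rw [← htoR _ _ (hfin _) (hfin _), hpart0]; simp
  have hCpos : 0 < (μ C).toReal := by linarith
  have hCne : μ C ≠ 0 := by
    intro h; rw [h] at hCpos; simp at hCpos
  -- integral computation
  have key : ∀ (z : ℝ) (f : Ω → ℝ) (B : Set (ℝ × ℝ × ℝ × ℝ)), MeasurableSet B →
      μ {ω | Z ω = z} ≠ 0 →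
      (∀ ω, Z ω = z → f ω = if ω ∈ W ⁻¹' B then 1 else 0) →
      ∫ ω, f ω ∂μ[|{ω | Z ω = z}] = (μ (W ⁻¹' B)).toReal := by
    intro z f B hB hz hf
    have hsm : MeasurableSet {ω | Z ω = z} := hZ (measurableSet_singleton z)
    rw [cond_integral_indicator' μ hsm (hWm hB) (fun ω hω => hf ω hω)]
    have hpre : {ω | Z ω = z} = Z ⁻¹' {z} := rfl
    rw [hpre, hindep.measure_inter_preimage_eq_mul _ _ (measurableSet_singleton z) hB]
    rw [ENNReal.toReal_mul, ENNReal.toReal_inv]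
    have hne : (μ (Z ⁻¹' {z})).toReal ≠ 0 := by
      rw [hpre] at hz
      exact ENNReal.toReal_ne_zero.2 ⟨hz, hfin _⟩
    field_simp
  -- preimage descriptions
  have hA1 : W ⁻¹' PA1 = S ∩ B1 := by
    ext ω
    simp [hWdef, hSdef, hB1def, hPA1def, Set.mem_prod, and_comm, eq_comm]
  have hA0 : W ⁻¹' PA0 = S ∩ B0 := by
    ext ω
    simp [hWdef, hSdef, hB0def, hPA0def, Set.mem_prod, and_comm, eq_comm]
  have hBB1 : W ⁻¹' PB1 = B1 := by
    ext ω; simp [hWdef, hB1def, hPB1def, Set.mem_prod, eq_comm]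
  have hBB0 : W ⁻¹' PB0 = B0 := by
    ext ω; simp [hWdef, hB0def, hPB0def, Set.mem_prod, eq_comm]
  have hmIic : MeasurableSet PA1 := by
    rw [hPA1def]
    exact measurableSet_Iic.prod (MeasurableSet.univ.prod (MeasurableSet.univ.prod (measurableSet_singleton 0)))
  have hmIic0 : MeasurableSet PA0 := by
    rw [hPA0def]
    exact measurableSet_Iic.prod (MeasurableSet.univ.prod ((measurableSet_singleton 0).prod MeasurableSet.univ))
  have hmB1 : MeasurableSet PB1 := by
    rw [hPB1def]
    exact MeasurableSet.univ.prod (MeasurableSet.univ.prod (MeasurableSet.univ.prod (measurableSet_singleton 0)))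
  have hmB0 : MeasurableSet PB0 := by
    rw [hPB0def]
    exact MeasurableSet.univ.prod (MeasurableSet.univ.prod ((measurableSet_singleton 0).prod MeasurableSet.univ))
  -- pointwise descriptions of integrands
  have hDZ1 : ∀ ω, Z ω = 1 → D ω = D1 ω := by
    intro ω hz; rw [hD, hz]; ring
  have hDZ0 : ∀ ω, Z ω = 0 → D ω = D0 ω := by
    intro ω hz; rw [hD, hz]; ring
  have hYD : ∀ ω, D ω = 0 → Y ω = Y0 ω := by
    intro ω hd; rw [hYobs, hd]; ring
  have hpt1 : ∀ ω, Z ω = 1 → (if Y ω ≤ t then 1 - D ω else 0) =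
      if ω ∈ W ⁻¹' PA1 then 1 else 0 := by
    intro ω hz
    rw [hA1]
    rcases hD1bin ω with h | h
    · have hd : D ω = 0 := by rw [hDZ1 ω hz, h]
      have hy := hYD ω hd
      by_cases hyt : Y0 ω ≤ t
      · simp [hd, hy, hyt, hSdef, hB1def, h]
      · simp [hd, hy, hyt, hSdef, hB1def, h]
    · have hd : D ω = 1 := by rw [hDZ1 ω hz, h]
      have : ω ∉ S ∩ B1 := by
        rintro ⟨_, hb⟩; simp only [hB1def, Set.mem_setOf_eq] at hb; rw [h] at hb; norm_num at hb
      simp [hd, this]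
  have hpt0 : ∀ ω, Z ω = 0 → (if Y ω ≤ t then 1 - D ω else 0) =
      if ω ∈ W ⁻¹' PA0 then 1 else 0 := by
    intro ω hz
    rw [hA0]
    rcases hD0bin ω with h | h
    · have hd : D ω = 0 := by rw [hDZ0 ω hz, h]
      have hy := hYD ω hd
      by_cases hyt : Y0 ω ≤ t
      · simp [hd, hy, hyt, hSdef, hB0def, h]
      · simp [hd, hy, hyt, hSdef, hB0def, h]
    · have hd : D ω = 1 := by rw [hDZ0 ω hz, h]
      have : ω ∉ S ∩ B0 := by
        rintro ⟨_, hb⟩; simp only [hB0def, Set.mem_setOf_eq] at hb; rw [h] at hb; norm_num at hb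
      simp [hd, this]
  have hqt1 : ∀ ω, Z ω = 1 → (1 - D ω) =
      if ω ∈ W ⁻¹' PB1 then 1 else 0 := by
    intro ω hz
    rw [hBB1]
    rcases hD1bin ω with h | h
    · have hd : D ω = 0 := by rw [hDZ1 ω hz, h]
      simp [hd, hB1def, h]
    · have hd : D ω = 1 := by rw [hDZ1 ω hz, h]
      have : ω ∉ B1 := by
        intro hb; simp only [hB1def, Set.mem_setOf_eq] at hb; rw [h] at hb; norm_num at hb
      simp [hd, this]
  have hqt0 : ∀ ω, Z ω = 0 → (1 - D ω) =
      if ω ∈ W ⁻¹' PB0 then 1 else 0 := by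
    intro ω hz
    rw [hBB0]
    rcases hD0bin ω with h | h
    · have hd : D ω = 0 := by rw [hDZ0 ω hz, h]
      simp [hd, hB0def, h]
    · have hd : D ω = 1 := by rw [hDZ0 ω hz, h]
      have : ω ∉ B0 := by
        intro hb; simp only [hB0def, Set.mem_setOf_eq] at hb; rw [h] at hb; norm_num at hb
      simp [hd, this]
  -- compute all four integrals
  have I1 : ∫ ω, (if Y ω ≤ t then 1 - D ω else 0) ∂μ[|{ω | Z ω = 1}] = (μ (S ∩ B1)).toReal := by
    rw [key 1 _ _ hmIic hZ1.ne' hpt1, hA1]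
  have I0 : ∫ ω, (if Y ω ≤ t then 1 - D ω else 0) ∂μ[|{ω | Z ω = 0}] = (μ (S ∩ B0)).toReal := by
    rw [key 0 _ _ hmIic0 hZ0.ne' hpt0, hA0]
  have J1 : ∫ ω, (1 - D ω) ∂μ[|{ω | Z ω = 1}] = (μ B1).toReal := by
    rw [key 1 _ _ hmB1 hZ1.ne' hqt1, hBB1]
  have J0 : ∫ ω, (1 - D ω) ∂μ[|{ω | Z ω = 0}] = (μ B0).toReal := by
    rw [key 0 _ _ hmB0 hZ0.ne' hqt0, hBB0]
  rw [I1, I0, J1, J0]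
  -- relate numerator/denominator to complier set
  have haddS := add S hSm
  have hCS : (μ (S ∩ B1)).toReal + (μ (S ∩ C)).toReal = (μ (S ∩ B0)).toReal := by
    rw [← htoR _ _ (hfin _) (hfin _), haddS]
  -- LHS
  rw [ProbabilityTheory.cond_apply hCm μ S, ENNReal.toReal_mul, ENNReal.toReal_inv]
  have hCSeq : μ (C ∩ S) = μ (S ∩ C) := by rw [Set.inter_comm]
  rw [hCSeq]
  have hCneR : (μ C).toReal ≠ 0 := ne_of_gt hCpos
  have hden : (μ B1).toReal - (μ B0).toReal = -(μ C).toReal := by linarith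
  have hnum : (μ (S ∩ B1)).toReal - (μ (S ∩ B0)).toReal = -(μ (S ∩ C)).toReal := by linarith
  rw [hnum, hden]
  field_simp
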